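/- Let φ : A → B be a homomorphism of generalized rings and 𝔟 an h-ideal of B. Then V_A(φ_{[1]}⁻¹(𝔟)) equals the closure of φ*(V_B(𝔟)) in spec(A), where φ* : spec(B) → spec(A) is the continuous map 𝔮 ↦ φ_{[1]}⁻¹(𝔮). -/

import Mathlib

open scoped Classical

noncomputable section

/-! ### Partially defined maps of finite sets -/

/-- Composition of partially defined maps of sets (`Set_•`). -/
def pcomp {X Y Z : Type} (g : Y → Option Z) (f : X → Option Y) : X → Option Z :=
  fun x => (f x).bind g

/-- The fiber of a partially defined map over a point of the target. -/
abbrev pfib {X Y : Type} (f : X → Option Y) (y : Y) : Type := {x : X // f x = some y}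

/-- The fiber of the identity partial map over `x` is a singleton. -/
def idFiberEquiv {X : Type} (x : X) : Fin 1 ≃ pfib (fun x' : X => some x') x where
  toFun _ := ⟨x, rfl⟩
  invFun _ := 0
  left_inv _ := Subsingleton.elim _ _
  right_inv p := Subtype.ext (Option.some.inj p.2).symm

/-- The fiber of the constant (total) map to the point `[1]` is everything. -/
def constFiberEquiv (X : Type) (z : Fin 1) :
    X ≃ pfib (fun _ : X => some (0 : Fin 1)) z where
  toFun x := ⟨x, congrArg some (Subsingleton.elim (0 : Fin 1) z)⟩
  invFun p := p.1
  left_inv _ := rfl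
  right_inv p := rfl

/-- The fiber of (the graph of) a bijection is a singleton. -/
def equivFiberEquiv {X Y : Type} (e : X ≃ Y) (y : Y) :
    Fin 1 ≃ pfib (fun x : X => some (e x)) y where
  toFun _ := ⟨e.symm y, congrArg some (e.apply_symm_apply y)⟩
  invFun _ := 0
  left_inv _ := Subsingleton.elim _ _
  right_inv p := Subtype.ext ((Equiv.symm_apply_eq e).mpr (Option.some.inj p.2).symm)

/-- The fiber of the map `[1] → X` with image `{x}` over `x' = x` is a singleton. -/
def pointFiberEquiv {X : Type} {x x' : X} (h : x = x') :
    Fin 1 ≃ pfib (fun _ : Fin 1 => some x) x' where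
  toFun z := ⟨z, congrArg some h⟩
  invFun p := p.1
  left_inv _ := rfl
  right_inv p := rfl

/-- Restriction of `f` to the fiber of `pcomp g f` over `z`, as a partial map into
the fiber of `g` over `z`. -/
def resMap {X Y Z : Type} (g : Y → Option Z) (f : X → Option Y) (z : Z) :
    pfib (pcomp g f) z → Option (pfib g z) :=
  fun x => (f x.1).bind fun y => if h : g y = some z then some ⟨y, h⟩ else none

/-- Identification of the fibers of the restriction `resMap g f z` with fibers of `f`. -/
def resFiberEquiv {X Y Z : Type} (g : Y → Option Z) (f : X → Option Y) (z : Z)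
    (p : pfib g z) : pfib f p.1 ≃ pfib (resMap g f z) p where
  toFun x := ⟨⟨x.1, by show (f x.1).bind g = some z; rw [x.2, Option.bind_some, p.2]⟩, by
    show (f x.1).bind _ = some p
    rw [x.2, Option.bind_some, dif_pos p.2]⟩
  invFun q := ⟨q.1.1, by
    have h := q.2
    unfold resMap at h
    rcases hf : f q.1.1 with _ | y
    · rw [hf, Option.bind_none] at h
      exact nomatch h
    · rw [hf, Option.bind_some] at h
      by_cases hg : g y = some z
      · rw [dif_pos hg] at h
        have hy : y = p.1 := congrArg Subtype.val (Option.some.inj h)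
        exact congrArg some hy
      · rw [dif_neg hg] at h
        exact nomatch h⟩
  left_inv x := Subtype.ext rfl
  right_inv q := Subtype.ext (Subtype.ext rfl)

/-! ### Fibered products -/

/-- The fibered product of two partial maps `g : Z ⇀ Y` and `f : X ⇀ Y`. -/
abbrev FP {X Y Z : Type} (g : Z → Option Y) (f : X → Option Y) : Type :=
  {p : Z × X // ∃ y : Y, g p.1 = some y ∧ f p.2 = some y}

/-- First projection of the fibered product, as a partial map. -/
def fpFst {X Y Z : Type} (g : Z → Option Y) (f : X → Option Y) : FP g f → Option Z :=
  fun p => some p.1.1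

/-- Second projection of the fibered product, as a partial map. -/
def fpSnd {X Y Z : Type} (g : Z → Option Y) (f : X → Option Y) : FP g f → Option X :=
  fun p => some p.1.2

/-- Identification of the fiber of the second projection of `Z ×_Y X` over `x`
with the fiber of `g` over `f x`. -/
def fpFiberSnd {X Y Z : Type} (g : Z → Option Y) (f : X → Option Y) {x : X} {y : Y}
    (hy : f x = some y) : pfib g y ≃ pfib (fpSnd g f) x where
  toFun w := ⟨⟨(w.1, x), ⟨y, w.2, hy⟩⟩, rfl⟩
  invFun q := ⟨q.1.1.1, by
    obtain ⟨y', hg, hf⟩ := q.1.2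
    have hx : q.1.1.2 = x := Option.some.inj q.2
    rw [hx] at hf
    have hyy : y' = y := Option.some.inj (hf.symm.trans hy)
    rw [hyy] at hg
    exact hg⟩
  left_inv w := Subtype.ext rfl
  right_inv q := by
    apply Subtype.ext
    apply Subtype.ext
    have hx : q.1.1.2 = x := Option.some.inj q.2
    exact Prod.ext rfl hx.symm

/-- Identification of the fiber of the first projection of `Z ×_Y X` over `z`
with the fiber of `f` over `g z`. -/
def fpFiberFst {X Y Z : Type} (g : Z → Option Y) (f : X → Option Y) {z : Z} {y : Y}
    (hy : g z = some y) : pfib f y ≃ pfib (fpFst g f) z where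
  toFun w := ⟨⟨(z, w.1), ⟨y, hy, w.2⟩⟩, rfl⟩
  invFun q := ⟨q.1.1.2, by
    obtain ⟨y', hg, hf⟩ := q.1.2
    have hz : q.1.1.1 = z := Option.some.inj q.2
    rw [hz] at hg
    have hyy : y' = y := Option.some.inj (hg.symm.trans hy)
    rw [hyy] at hf
    exact hf⟩
  left_inv w := Subtype.ext rfl
  right_inv q := by
    apply Subtype.ext
    apply Subtype.ext
    have hz : q.1.1.1 = z := Option.some.inj q.2
    exact Prod.ext hz.symm rfl
/-! ### Generalized rings

A generalized ring assigns to each finite set `X` a pointed set `A X`, functorially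
with respect to bijections (and hence, via the operations and units, with respect to
all partial bijections of finite sets), together with operations of multiplication
`∘ : A Y × A f → A X` and contraction `( , ) : A X × A f → A Y` for every partially
defined map `f : X ⇀ Y`, where `A f = ∏_{y ∈ Y} A (f⁻¹ y)`, and a unit `1 ∈ A [1]`,
subject to the axioms of associativity, left- and right-adjunction, left- and
right-linearity, and the unit axioms. -/

/-- The data underlying a generalized ring. -/
structure GenRingData where
  /-- the pointed set attached to a finite set `X` -/
  A : (X : Type) → [inst : Finite X] → Type
  /-- the base point `0_X ∈ A_X` -/
  zero : (X : Type) → [inst : Finite X] → A X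
  /-- the unit `1 ∈ A_{[1]}` -/
  one : A (Fin 1)
  /-- functoriality with respect to bijections of finite sets -/
  map : {X Y : Type} → [inst : Finite X] → [inst' : Finite Y] → (X ≃ Y) → A X → A Y
  /-- multiplication `∘ : A_Y × A_f → A_X` for a partially defined map `f : X ⇀ Y` -/
  mul : {X Y : Type} → [inst : Finite X] → [inst' : Finite Y] → (f : X → Option Y) →
      A Y → ((y : Y) → A (pfib f y)) → A X
  /-- contraction `( , ) : A_X × A_f → A_Y` for a partially defined map `f : X ⇀ Y` -/
  contr : {X Y : Type} → [inst : Finite X] → [inst' : Finite Y] → (f : X → Option Y) →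
      A X → ((y : Y) → A (pfib f y)) → A Y

namespace GenRingData

variable (R : GenRingData)

/-- The unit family `1_{id_X} ∈ A_{id_X}`. -/
def oneId (X : Type) [Finite X] : (x : X) → R.A (pfib (fun x' : X => some x') x) :=
  fun x => R.map (idFiberEquiv x) R.one

/-- The monoid operation `a ∘ b` on `A_{[1]}`. -/
def op (a b : R.A (Fin 1)) : R.A (Fin 1) :=
  R.mul (fun z : Fin 1 => some z) a (fun z => R.map (idFiberEquiv z) b)

/-- The `n`-fold power `a ∘ ⋯ ∘ a` in the monoid `A_{[1]}` (with `a⁰ = 1`). -/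
def opPow (a : R.A (Fin 1)) : ℕ → R.A (Fin 1)
  | 0 => R.one
  | n + 1 => R.op a (opPow a n)

/-- The left action `s ∘ a` of `A_{[1]}` on `A_X` (operation (1.2.5)). -/
def lact {X : Type} [Finite X] (s : R.A (Fin 1)) (a : R.A X) : R.A X :=
  R.mul (fun _ : X => some (0 : Fin 1)) s (fun z => R.map (constFiberEquiv X z) a)

/-- The pairing `(a, d) : A_X × A_X → A_{[1]}` (operation (1.2.6)). -/
def pair {X : Type} [Finite X] (a d : R.A X) : R.A (Fin 1) :=
  R.contr (fun _ : X => some (0 : Fin 1)) a (fun z => R.map (constFiberEquiv X z) d)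

/-- The right (diagonal) action `b ∘ c` of `(A_{[1]})^X` on `A_X` (operation (1.2.7)). -/
def ract {X : Type} [Finite X] (b : R.A X) (c : X → R.A (Fin 1)) : R.A X :=
  R.mul (fun x : X => some x) b (fun x => R.map (idFiberEquiv x) (c x))

/-- The involution `a ↦ aᵗ = (1, a)` of `A_{[1]}`. -/
def adj (a : R.A (Fin 1)) : R.A (Fin 1) := R.pair R.one a

/-- The element `(a, 1_{j_x}) ∈ A_X` obtained from `a ∈ A_{[1]}` via the
inclusion `j_x : {x} ↪ X`; for `a = 1` this is the image `1_x` of the unit. -/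
def pointElt (X : Type) [Finite X] (x : X) (a : R.A (Fin 1)) : R.A X :=
  R.contr (fun _ : Fin 1 => some x) a
    (fun x' => if h : x = x' then R.map (pointFiberEquiv h) R.one else R.zero _)

/-- The extended multiplication `A_g × A_f → A_{g∘f}`, defined fiberwise. -/
def emul {X Y Z : Type} [Finite X] [Finite Y] [Finite Z]
    (g : Y → Option Z) (f : X → Option Y)
    (c : (z : Z) → R.A (pfib g z)) (b : (y : Y) → R.A (pfib f y)) :
    (z : Z) → R.A (pfib (pcomp g f) z) :=
  fun z => R.mul (resMap g f z) (c z) (fun p => R.map (resFiberEquiv g f z p) (b p.1))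

/-- The extended contraction `A_{g∘f} × A_f → A_g`, defined fiberwise. -/
def econtr {X Y Z : Type} [Finite X] [Finite Y] [Finite Z]
    (g : Y → Option Z) (f : X → Option Y)
    (a : (z : Z) → R.A (pfib (pcomp g f) z)) (b : (y : Y) → R.A (pfib f y)) :
    (z : Z) → R.A (pfib g z) :=
  fun z => R.contr (resMap g f z) (a z) (fun p => R.map (resFiberEquiv g f z p) (b p.1))

/-- The pullback `ã ∈ A_{g̃}` of `a ∈ A_g` along the fibered product (used in
the right-linearity axiom). -/
def atilde {X Y Z : Type} [Finite X] [Finite Y] [Finite Z]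
    (g : Z → Option Y) (f : X → Option Y) (a : (y : Y) → R.A (pfib g y)) :
    (x : X) → R.A (pfib (fpSnd g f) x) :=
  fun x =>
    match hfx : f x with
    | some y => R.map (fpFiberSnd g f hfx) (a y)
    | none => R.zero _

/-- The pullback `c̃ ∈ A_{f̃}` of `c ∈ A_f` along the fibered product (used in
the right-linearity axiom). -/
def ctilde {X Y Z : Type} [Finite X] [Finite Y] [Finite Z]
    (g : Z → Option Y) (f : X → Option Y) (c : (y : Y) → R.A (pfib f y)) :
    (z : Z) → R.A (pfib (fpFst g f) z) :=
  fun z =>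
    match hgz : g z with
    | some y => R.map (fpFiberFst g f hgz) (c y)
    | none => R.zero _

end GenRingData

/-- A generalized ring: the data of `GenRingData` subject to the axioms
(pointedness, functoriality, zero laws, associativity, left/right adjunction,
left/right linearity, and the unit axioms, the latter in their reduced form over
the one-point base, which is equivalent to the general form). -/
structure GenRing where
  /-- the underlying data -/
  data : GenRingData
  /-- `A_∅ = {0}` -/
  isEmpty_eq_zero : ∀ (X : Type) [Finite X] [IsEmpty X] (a : data.A X), a = data.zero X
  /-- functoriality: identity -/
  map_refl : ∀ (X : Type) [Finite X] (a : data.A X), data.map (Equiv.refl X) a = a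
  /-- functoriality: composition -/
  map_trans : ∀ {X Y Z : Type} [Finite X] [Finite Y] [Finite Z] (e : X ≃ Y) (e' : Y ≃ Z)
      (a : data.A X), data.map (e.trans e') a = data.map e' (data.map e a)
  /-- functoriality: the maps are pointed -/
  map_zero : ∀ {X Y : Type} [Finite X] [Finite Y] (e : X ≃ Y),
      data.map e (data.zero X) = data.zero Y
  /-- `0 ∘ b = 0` -/
  mul_zero_left : ∀ {X Y : Type} [Finite X] [Finite Y] (f : X → Option Y)
      (b : (y : Y) → data.A (pfib f y)), data.mul f (data.zero Y) b = data.zero X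
  /-- `a ∘ 0_f = 0` -/
  mul_zero_right : ∀ {X Y : Type} [Finite X] [Finite Y] (f : X → Option Y) (a : data.A Y),
      data.mul f a (fun y => data.zero (pfib f y)) = data.zero X
  /-- `(0, b) = 0` -/
  contr_zero_left : ∀ {X Y : Type} [Finite X] [Finite Y] (f : X → Option Y)
      (b : (y : Y) → data.A (pfib f y)), data.contr f (data.zero X) b = data.zero Y
  /-- `(a, 0_f) = 0` -/
  contr_zero_right : ∀ {X Y : Type} [Finite X] [Finite Y] (f : X → Option Y) (a : data.A X),
      data.contr f a (fun y => data.zero (pfib f y)) = data.zero Y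
  /-- associativity: `d ∘ (c ∘ b) = (d ∘ c) ∘ b` -/
  assoc : ∀ {X Y Z : Type} [Finite X] [Finite Y] [Finite Z]
      (g : Y → Option Z) (f : X → Option Y) (d : data.A Z)
      (c : (z : Z) → data.A (pfib g z)) (b : (y : Y) → data.A (pfib f y)),
      data.mul (pcomp g f) d (data.emul g f c b) = data.mul f (data.mul g d c) b
  /-- left-adjunction: `(d, a ∘ c) = ((d, c), a)` -/
  left_adj : ∀ {X Y Z : Type} [Finite X] [Finite Y] [Finite Z]
      (g : Y → Option Z) (f : X → Option Y) (d : data.A X)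
      (a : (z : Z) → data.A (pfib g z)) (c : (y : Y) → data.A (pfib f y)),
      data.contr (pcomp g f) d (data.emul g f a c) = data.contr g (data.contr f d c) a
  /-- right-adjunction: `(d ∘ c, a) = (d, (a, c))` -/
  right_adj : ∀ {X Y Z : Type} [Finite X] [Finite Y] [Finite Z]
      (g : Y → Option Z) (f : X → Option Y) (d : data.A Y)
      (a : (z : Z) → data.A (pfib (pcomp g f) z)) (c : (y : Y) → data.A (pfib f y)),
      data.contr (pcomp g f) (data.mul f d c) a = data.contr g d (data.econtr g f a c)
  /-- left-linearity: `(d ∘ a, c) = d ∘ (a, c)` -/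
  left_lin : ∀ {X Y Z : Type} [Finite X] [Finite Y] [Finite Z]
      (g : Y → Option Z) (f : X → Option Y) (d : data.A Z)
      (a : (z : Z) → data.A (pfib (pcomp g f) z)) (c : (y : Y) → data.A (pfib f y)),
      data.contr f (data.mul (pcomp g f) d a) c = data.mul g d (data.econtr g f a c)
  /-- right-linearity: `(d, c) ∘ a = (d ∘ ã, c̃)`, with `ã`, `c̃` the pullbacks
  along the fibered product `Z ×_Y X` -/
  right_lin : ∀ {X Y Z : Type} [Finite X] [Finite Y] [Finite Z]
      (g : Z → Option Y) (f : X → Option Y) (d : data.A X)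
      (a : (y : Y) → data.A (pfib g y)) (c : (y : Y) → data.A (pfib f y)),
      data.mul g (data.contr f d c) a
        = data.contr (fpFst g f) (data.mul (fpSnd g f) d (data.atilde g f a))
            (data.ctilde g f c)
  /-- unit axiom: `a ∘ 1_{id_X} = a` -/
  mul_one_id : ∀ (X : Type) [Finite X] (a : data.A X),
      data.mul (fun x : X => some x) a (data.oneId X) = a
  /-- unit axiom: `1 ∘ a = a` -/
  one_lact : ∀ (X : Type) [Finite X] (a : data.A X), data.lact data.one a = a
  /-- unit axiom: `(a, 1_{id_X}) = a` -/
  contr_one_id : ∀ (X : Type) [Finite X] (a : data.A X),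
      data.contr (fun x : X => some x) a (data.oneId X) = a
  /-- unit axiom (1.8.11): `(a, 1_f) = f_A(a)` for a bijection `f = e` -/
  map_eq_contr : ∀ {X Y : Type} [Finite X] [Finite Y] (e : X ≃ Y) (a : data.A X),
      data.contr (fun x : X => some (e x)) a
        (fun y => data.map (equivFiberEquiv e y) data.one) = data.map e a
  /-- unit axiom (1.8.11): `a ∘ 1_{fᵗ} = f_A(a)` for a bijection `f = e` -/
  map_eq_mul : ∀ {X Y : Type} [Finite X] [Finite Y] (e : X ≃ Y) (a : data.A X),
      data.mul (fun y : Y => some (e.symm y)) a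
        (fun x => data.map (equivFiberEquiv e.symm x) data.one) = data.map e a
namespace GenRing

variable (R : GenRing)

/-- An `h`-ideal of a generalized ring: a subset `I ⊆ A_{[1]}` such that
`(b ∘ c, d) ∈ I` for all finite `X`, all `b, d ∈ A_X` and all `c ∈ I^X ⊆ (A_{[1]})^X`. -/
def IsHIdeal (I : Set (R.data.A (Fin 1))) : Prop :=
  ∀ (X : Type) [Finite X], ∀ (b d : R.data.A X) (c : X → R.data.A (Fin 1)),
    (∀ x, c x ∈ I) → R.data.pair (R.data.ract b c) d ∈ I

/-- A prime of a generalized ring: a proper `h`-ideal `P` whose complement is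
closed under the multiplication of `A_{[1]}`. -/
def IsPrimeH (P : Set (R.data.A (Fin 1))) : Prop :=
  R.IsHIdeal P ∧ R.data.one ∉ P ∧
    ∀ a b : R.data.A (Fin 1), R.data.op a b ∈ P → a ∈ P ∨ b ∈ P

end GenRing

/-- The spectrum of a generalized ring: the set of its primes. -/
structure SpecG (R : GenRing) where
  /-- the underlying prime `h`-ideal -/
  I : Set (R.data.A (Fin 1))
  /-- it is prime -/
  prime : R.IsPrimeH I

namespace GenRing

variable (R : GenRing)

/-- The basic open set `D_a = {𝔭 : a ∉ 𝔭}` of the Zariski topology. -/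
def basicOpen (a : R.data.A (Fin 1)) : Set (SpecG R) := {p | a ∉ p.I}

/-- The closed set `V(s) = {𝔭 : 𝔭 ⊇ s}` of the Zariski topology. -/
def zeroLocus (s : Set (R.data.A (Fin 1))) : Set (SpecG R) := {p | s ⊆ p.I}

/-- The Zariski topology on the spectrum, generated by the basic open sets. -/
instance : TopologicalSpace (SpecG R) :=
  TopologicalSpace.generateFrom {U | ∃ a : R.data.A (Fin 1), U = R.basicOpen a}

end GenRing

/-- A homomorphism of generalized rings: a (pointed, natural) family of maps
preserving multiplication, contraction and the unit. -/
structure GenRingHom (R S : GenRing) where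
  /-- the underlying family of maps -/
  app : (X : Type) → [inst : Finite X] → R.data.A X → S.data.A X
  /-- zero is preserved -/
  app_zero : ∀ (X : Type) [Finite X], app X (R.data.zero X) = S.data.zero X
  /-- the unit is preserved -/
  app_one : app (Fin 1) R.data.one = S.data.one
  /-- naturality with respect to bijections -/
  app_map : ∀ {X Y : Type} [Finite X] [Finite Y] (e : X ≃ Y) (a : R.data.A X),
      app Y (R.data.map e a) = S.data.map e (app X a)
  /-- multiplication is preserved -/
  app_mul : ∀ {X Y : Type} [Finite X] [Finite Y] (f : X → Option Y)
      (a : R.data.A Y) (b : (y : Y) → R.data.A (pfib f y)),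
      app X (R.data.mul f a b) = S.data.mul f (app Y a) (fun y => app (pfib f y) (b y))
  /-- contraction is preserved -/
  app_contr : ∀ {X Y : Type} [Finite X] [Finite Y] (f : X → Option Y)
      (a : R.data.A X) (b : (y : Y) → R.data.A (pfib f y)),
      app Y (R.data.contr f a b) = S.data.contr f (app X a) (fun y => app (pfib f y) (b y))

namespace GenRingHom

variable {R S : GenRing} (φ : GenRingHom R S)

theorem app_op (a b : R.data.A (Fin 1)) :
    φ.app (Fin 1) (R.data.op a b) = S.data.op (φ.app (Fin 1) a) (φ.app (Fin 1) b) := by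
  unfold GenRingData.op
  rw [φ.app_mul]
  congr 1
  funext z
  rw [φ.app_map]

theorem app_ract {X : Type} [Finite X] (b : R.data.A X) (c : X → R.data.A (Fin 1)) :
    φ.app X (R.data.ract b c) = S.data.ract (φ.app X b) (fun x => φ.app (Fin 1) (c x)) := by
  unfold GenRingData.ract
  rw [φ.app_mul]
  congr 1
  funext x
  rw [φ.app_map]

theorem app_pair {X : Type} [Finite X] (a d : R.data.A X) :
    φ.app (Fin 1) (R.data.pair a d) = S.data.pair (φ.app X a) (φ.app X d) := by
  unfold GenRingData.pair
  rw [φ.app_contr]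
  congr 1
  funext z
  rw [φ.app_map]

theorem app_lact {X : Type} [Finite X] (s : R.data.A (Fin 1)) (a : R.data.A X) :
    φ.app X (R.data.lact s a) = S.data.lact (φ.app (Fin 1) s) (φ.app X a) := by
  unfold GenRingData.lact
  rw [φ.app_mul]
  congr 1
  funext z
  rw [φ.app_map]

/-- The map `spec(φ) : spec(S) → spec(R)`, `𝔮 ↦ φ_{[1]}⁻¹(𝔮)`, induced by a
homomorphism of generalized rings `φ : R → S`. -/
def specMap (q : SpecG S) : SpecG R where
  I := φ.app (Fin 1) ⁻¹' q.I
  prime := by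
    refine ⟨?_, ?_, ?_⟩
    · intro X _ b d c hc
      show φ.app (Fin 1) (R.data.pair (R.data.ract b c) d) ∈ q.I
      rw [φ.app_pair, φ.app_ract]
      exact q.prime.1 X (φ.app X b) (φ.app X d) (fun x => φ.app (Fin 1) (c x)) hc
    · show φ.app (Fin 1) R.data.one ∉ q.I
      rw [φ.app_one]
      exact q.prime.2.1
    · intro a b hab
      have h : S.data.op (φ.app (Fin 1) a) (φ.app (Fin 1) b) ∈ q.I := by
        rw [← φ.app_op]; exact hab
      exact q.prime.2.2 _ _ h

end GenRingHom

/-- An equivalence ideal of a generalized ring: a family of equivalence relations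
on the sets `A_X` respecting the operations of multiplication and contraction. -/
structure EqvIdeal (R : GenRing) where
  /-- the family of relations -/
  rel : (X : Type) → [inst : Finite X] → R.data.A X → R.data.A X → Prop
  refl : ∀ (X : Type) [Finite X] (a : R.data.A X), rel X a a
  symm : ∀ (X : Type) [Finite X] {a b : R.data.A X}, rel X a b → rel X b a
  trans : ∀ (X : Type) [Finite X] {a b c : R.data.A X}, rel X a b → rel X b c → rel X a c
  /-- `a ∼ a'` implies `a ∘ b ∼ a' ∘ b` -/
  mul_left : ∀ {X Y : Type} [Finite X] [Finite Y] (f : X → Option Y) {a a' : R.data.A Y}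
      (b : (y : Y) → R.data.A (pfib f y)),
      rel Y a a' → rel X (R.data.mul f a b) (R.data.mul f a' b)
  /-- `b ∼ b'` (componentwise) implies `a ∘ b ∼ a ∘ b'` -/
  mul_right : ∀ {X Y : Type} [Finite X] [Finite Y] (f : X → Option Y) (a : R.data.A Y)
      {b b' : (y : Y) → R.data.A (pfib f y)},
      (∀ y, rel (pfib f y) (b y) (b' y)) → rel X (R.data.mul f a b) (R.data.mul f a b')
  /-- `a ∼ a'` implies `(a, b) ∼ (a', b)` -/
  contr_left : ∀ {X Y : Type} [Finite X] [Finite Y] (f : X → Option Y) {a a' : R.data.A X}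
      (b : (y : Y) → R.data.A (pfib f y)),
      rel X a a' → rel Y (R.data.contr f a b) (R.data.contr f a' b)
  /-- `b ∼ b'` (componentwise) implies `(a, b) ∼ (a, b')` -/
  contr_right : ∀ {X Y : Type} [Finite X] [Finite Y] (f : X → Option Y) (a : R.data.A X)
      {b b' : (y : Y) → R.data.A (pfib f y)},
      (∀ y, rel (pfib f y) (b y) (b' y)) → rel Y (R.data.contr f a b) (R.data.contr f a b')

namespace GenRing

variable (R : GenRing)

/-- The equivalence ideal `E(I)` generated by an (`h`-)ideal `I`: `a ∼ b` iff the
pair `(a, b)` belongs to every equivalence ideal containing `(i, 0)` for all `i ∈ I`. -/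
def erel (I : Set (R.data.A (Fin 1))) (X : Type) [Finite X] (a b : R.data.A X) : Prop :=
  ∀ ε : EqvIdeal R, (∀ i ∈ I, ε.rel (Fin 1) i (R.data.zero (Fin 1))) → ε.rel X a b

/-- A stable `h`-ideal: an `h`-ideal `I` such that for every pair `(a, b)` in the
equivalence ideal `E(I)` generated by `I` one has `a ∈ I ↔ b ∈ I`. -/
def IsStableHIdeal (I : Set (R.data.A (Fin 1))) : Prop :=
  R.IsHIdeal I ∧ ∀ a b : R.data.A (Fin 1), R.erel I (Fin 1) a b → (a ∈ I ↔ b ∈ I)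

/-- A multiplicative subset of `A_{[1]}`: contains `1`, closed under `∘`,
and stable under the involution. -/
def IsMulSet (S : Set (R.data.A (Fin 1))) : Prop :=
  R.data.one ∈ S ∧ (∀ a ∈ S, ∀ b ∈ S, R.data.op a b ∈ S) ∧
    (∀ a, a ∈ S ↔ R.data.adj a ∈ S)

/-- `φ : R → L` presents `L` as the localization `S⁻¹R` of `R` at the
multiplicative subset `S ⊆ A_{[1]}`: every element of `S` becomes invertible, every
element of `L` is a fraction `φ(a)/φ(s)`, and `φ(a) = φ(b)` iff `s ∘ a = s ∘ b`
for some `s ∈ S`. -/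
def IsLocalizationAt (S : Set (R.data.A (Fin 1))) {L : GenRing} (φ : GenRingHom R L) : Prop :=
  (∀ s ∈ S, ∃ t : L.data.A (Fin 1),
      L.data.op t (φ.app (Fin 1) s) = L.data.one ∧
      L.data.op (φ.app (Fin 1) s) t = L.data.one) ∧
  (∀ (X : Type) [Finite X], ∀ l : L.data.A X, ∃ (a : R.data.A X) (s : R.data.A (Fin 1)),
      s ∈ S ∧ L.data.lact (φ.app (Fin 1) s) l = φ.app X a) ∧
  (∀ (X : Type) [Finite X], ∀ a b : R.data.A X,
      φ.app X a = φ.app X b ↔ ∃ s ∈ S, R.data.lact s a = R.data.lact s b)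

end GenRing

section Aux

variable (R : GenRing)

/-- Congruence for `mul` along an equality of partial maps, for `map`-formed families. -/
lemma congr_mul {X Y : Type} [Finite X] [Finite Y] {f g : X → Option Y} (h : f = g)
    (a : R.data.A Y) {T : Y → Type} [∀ y, Finite (T y)] (t : ∀ y, R.data.A (T y))
    (e₁ : ∀ y, T y ≃ pfib f y) (e₂ : ∀ y, T y ≃ pfib g y)
    (hee : ∀ y p, ((e₁ y) p).1 = ((e₂ y) p).1) :
    R.data.mul f a (fun y => R.data.map (e₁ y) (t y))
      = R.data.mul g a (fun y => R.data.map (e₂ y) (t y)) := by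
  subst h
  have he : e₁ = e₂ := funext fun y => Equiv.ext fun p => Subtype.ext (hee y p)
  rw [he]

/-- Congruence for `contr` along an equality of partial maps, for `map`-formed families. -/
lemma congr_contr {X Y : Type} [Finite X] [Finite Y] {f g : X → Option Y} (h : f = g)
    (a : R.data.A X) {T : Y → Type} [∀ y, Finite (T y)] (t : ∀ y, R.data.A (T y))
    (e₁ : ∀ y, T y ≃ pfib f y) (e₂ : ∀ y, T y ≃ pfib g y)
    (hee : ∀ y p, ((e₁ y) p).1 = ((e₂ y) p).1) :
    R.data.contr f a (fun y => R.data.map (e₁ y) (t y))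
      = R.data.contr g a (fun y => R.data.map (e₂ y) (t y)) := by
  subst h
  have he : e₁ = e₂ := funext fun y => Equiv.ext fun p => Subtype.ext (hee y p)
  rw [he]

lemma op_one (a : R.data.A (Fin 1)) : R.data.op a R.data.one = a :=
  R.mul_one_id (Fin 1) a

lemma cm_eq_idf : (fun _ : Fin 1 => some (0 : Fin 1)) = (fun z : Fin 1 => some z) :=
  funext fun z => congrArg some (Subsingleton.elim _ _)

lemma one_op (a : R.data.A (Fin 1)) : R.data.op R.data.one a = a := by
  have e := congr_mul R (cm_eq_idf) R.data.one (T := fun _ => Fin 1) (fun _ => a)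
      (constFiberEquiv (Fin 1)) idFiberEquiv
      (fun y p => Subsingleton.elim _ _)
  calc R.data.op R.data.one a = R.data.lact R.data.one a := e.symm
    _ = a := R.one_lact (Fin 1) a

lemma pair_one (a : R.data.A (Fin 1)) : R.data.pair a R.data.one = a := by
  have e := congr_contr R (cm_eq_idf) a (T := fun _ => Fin 1) (fun _ => R.data.one)
      (constFiberEquiv (Fin 1)) idFiberEquiv
      (fun y p => Subsingleton.elim _ _)
  calc R.data.pair a R.data.one
      = R.data.contr (fun x : Fin 1 => some x) a (R.data.oneId (Fin 1)) := e
    _ = a := R.contr_one_id (Fin 1) a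

lemma ract_const {b c : R.data.A (Fin 1)} :
    R.data.ract b (fun _ => c) = R.data.op b c := rfl

lemma ract_fin1 (b : R.data.A (Fin 1)) (c : Fin 1 → R.data.A (Fin 1)) :
    R.data.ract b c = R.data.op b (c 0) := by
  unfold GenRingData.ract GenRingData.op
  have : (fun x : Fin 1 => R.data.map (idFiberEquiv x) (c x))
      = fun z : Fin 1 => R.data.map (idFiberEquiv z) (c 0) := by
    funext x
    have hx : x = 0 := Subsingleton.elim _ _
    subst hx; rfl
  rw [this]

end Aux
section Aux2

/-- Fiber equivalence for precomposition with a bijection. -/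
def natFib {X X' Y : Type} (e : X ≃ X') (f : X → Option Y) (y : Y) :
    pfib f y ≃ pfib (fun x' => f (e.symm x')) y where
  toFun p := ⟨e p.1, by simpa using p.2⟩
  invFun q := ⟨e.symm q.1, q.2⟩
  left_inv p := Subtype.ext (e.symm_apply_apply p.1)
  right_inv q := Subtype.ext (e.apply_symm_apply q.1)

/-- Fiber equivalence along an equality of maps. -/
def pfibCongr {X Y : Type} {f g : X → Option Y} (h : f = g) (y : Y) :
    pfib f y ≃ pfib g y where
  toFun p := ⟨p.1, h ▸ p.2⟩
  invFun q := ⟨q.1, h.symm ▸ q.2⟩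
  left_inv p := Subtype.ext rfl
  right_inv q := Subtype.ext rfl

lemma resMap_graph {X X' Y : Type} (e : X ≃ X') (f : X → Option Y) (y : Y)
    (q : pfib (pcomp f (fun x' : X' => some (e.symm x'))) y) :
    resMap f (fun x' : X' => some (e.symm x')) y q = some ((natFib e f y).symm q) := by
  show (Option.some (e.symm q.1)).bind _ = _
  rw [Option.bind_some, dif_pos (show f (e.symm q.1) = some y from q.2)]
  rfl

lemma resMap_graph_fiber_subsingleton {X X' Y : Type} (e : X ≃ X') (f : X → Option Y)
    (y : Y) (p : pfib f y) :
    Subsingleton (pfib (resMap f (fun x' : X' => some (e.symm x')) y) p) := by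
  constructor
  rintro ⟨q, hq⟩ ⟨q', hq'⟩
  rw [resMap_graph] at hq hq'
  have h1 := Option.some.inj hq
  have h2 := Option.some.inj hq'
  have e1 : q = (natFib e f y) p := by
    rw [← h1]; exact ((natFib e f y).apply_symm_apply q).symm
  have e2 : q' = (natFib e f y) p := by
    rw [← h2]; exact ((natFib e f y).apply_symm_apply q').symm
  apply Subtype.ext
  show q = q'
  rw [e1, e2]

variable (R : GenRing)

/-- Naturality of `mul` in the underlying set. -/
lemma V1_mul {X X' Y : Type} [Finite X] [Finite X'] [Finite Y]
    (e : X ≃ X') (f : X → Option Y) (a : R.data.A Y) (fam : ∀ y, R.data.A (pfib f y)) :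
    R.data.map e (R.data.mul f a fam)
      = R.data.mul (fun x' => f (e.symm x')) a
          (fun y => R.data.map (natFib e f y) (fam y)) := by
  rw [← R.map_eq_mul e (R.data.mul f a fam)]
  rw [← R.assoc f (fun x' : X' => some (e.symm x')) a fam
      (fun x => R.data.map (equivFiberEquiv e.symm x) R.data.one)]
  have hfam : R.data.emul f (fun x' : X' => some (e.symm x')) fam
        (fun x => R.data.map (equivFiberEquiv e.symm x) R.data.one)
      = fun y => R.data.map (natFib e f y) (fam y) := by
    funext y
    show R.data.mul (resMap f _ y) (fam y) _ = _
    have hres : resMap f (fun x' : X' => some (e.symm x')) y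
        = fun q => some ((natFib e f y).symm q) := funext (resMap_graph e f y)
    have hone : (fun p => R.data.map (resFiberEquiv f (fun x' : X' => some (e.symm x')) y p)
          ((fun x => R.data.map (equivFiberEquiv e.symm x) R.data.one) p.1))
        = fun p => R.data.map ((equivFiberEquiv e.symm p.1).trans
            (resFiberEquiv f (fun x' : X' => some (e.symm x')) y p)) R.data.one := by
      funext p; rw [R.map_trans]
    rw [hone]
    have := congr_mul R hres (fam y) (T := fun _ => Fin 1) (fun _ => R.data.one)
      (fun p => (equivFiberEquiv e.symm p.1).trans
          (resFiberEquiv f (fun x' : X' => some (e.symm x')) y p))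
      (fun p => equivFiberEquiv (natFib e f y).symm p)
      (fun p z => Subtype.ext rfl)
    rw [this]
    exact R.map_eq_mul (natFib e f y) (fam y)
  rw [hfam]
  rfl

end Aux2
section Aux3

variable {P S : Type}

/-- The fibered product of `g` with the graph of `E : Fin 1 ≃ S` is `P`. -/
def g2eP (g : P → Option S) (E : Fin 1 ≃ S) (hg : ∀ p, g p = some (E 0)) :
    FP g (fun z : Fin 1 => some (E z)) ≃ P where
  toFun p := p.1.1
  invFun p := ⟨(p, 0), ⟨E 0, hg p, rfl⟩⟩
  left_inv p := Subtype.ext (Prod.ext rfl (Subsingleton.elim _ _))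
  right_inv p := rfl

/-- Fiber of `fpSnd` as fiber of `g`, with constant-map target. -/
def g2e₂ [Subsingleton S] (g : P → Option S) (E : Fin 1 ≃ S) (x : Fin 1) :
    pfib g (E x) ≃ pfib (fun _ : FP g (fun z : Fin 1 => some (E z)) => some (0 : Fin 1)) x where
  toFun w := ⟨⟨(w.1, x), ⟨E x, w.2, rfl⟩⟩, congrArg some (Subsingleton.elim (0 : Fin 1) x)⟩
  invFun q := ⟨q.1.1.1, by
    obtain ⟨y, hgy, hEy⟩ := q.1.2
    rw [hgy]; exact congrArg some (Subsingleton.elim y (E x))⟩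
  left_inv w := Subtype.ext rfl
  right_inv q := Subtype.ext (Subtype.ext (Prod.ext rfl (Subsingleton.elim _ _)))

/-- The equivalence underlying `ground2`. -/
def ground2Equiv [Subsingleton S] (g : P → Option S) (E : Fin 1 ≃ S)
    (hg : ∀ p, g p = some (E 0)) : pfib g (E 0) ≃ P :=
  ((g2e₂ g E 0).trans
    (constFiberEquiv (FP g (fun z : Fin 1 => some (E z))) 0).symm).trans (g2eP g E hg)

lemma ground2Equiv_apply [Subsingleton S] (g : P → Option S) (E : Fin 1 ≃ S)
    (hg : ∀ p, g p = some (E 0)) (w : pfib g (E 0)) :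
    ground2Equiv g E hg w = w.1 := rfl

variable (R : GenRing)

/-- A `mul` along a (total) map to a subsingleton, with unit scalar, is a transport. -/
lemma ground2 [Finite P] [Finite S] [Subsingleton S] (g : P → Option S) (E : Fin 1 ≃ S)
    (hg : ∀ p, g p = some (E 0)) (fam : ∀ s, R.data.A (pfib g s)) :
    R.data.mul g (R.data.map E R.data.one) fam
      = R.data.map (ground2Equiv g E hg) (fam (E 0)) := by
  set f₁ : Fin 1 → Option S := fun z => some (E z) with hf₁
  rw [← R.map_eq_contr E R.data.one]
  rw [R.right_lin g f₁ R.data.one fam (fun y => R.data.map (equivFiberEquiv E y) R.data.one)]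
  -- inner mul
  set FPT := FP g f₁ with hFPT
  have hsnd : fpSnd g f₁ = fun _ : FPT => some (0 : Fin 1) :=
    funext fun p => congrArg some (Subsingleton.elim _ _)
  have hat : R.data.atilde g f₁ fam
      = fun x => R.data.map (fpFiberSnd g f₁ (rfl : f₁ x = some (E x))) (fam (E x)) := rfl
  have hinner : R.data.mul (fpSnd g f₁) R.data.one (R.data.atilde g f₁ fam)
      = R.data.map (((g2e₂ g E 0).trans
          (constFiberEquiv FPT 0).symm)) (fam (E 0)) := by
    rw [hat]
    have step := congr_mul R hsnd R.data.one (T := fun x => pfib g (E x))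
      (fun x => fam (E x))
      (fun x => fpFiberSnd g f₁ (rfl : f₁ x = some (E x)))
      (fun x => g2e₂ g E x)
      (fun x w => rfl)
    rw [step]
    have hfameq : (fun x => R.data.map (g2e₂ g E x) (fam (E x)))
        = fun z => R.data.map (constFiberEquiv FPT z)
            (R.data.map ((g2e₂ g E 0).trans (constFiberEquiv FPT 0).symm) (fam (E 0))) := by
      funext x
      have hx : x = 0 := Subsingleton.elim _ _
      subst hx
      rw [← R.map_trans]
      congr 1
    rw [hfameq]
    exact R.one_lact FPT _
  rw [hinner]
  -- outer contr
  have hct : R.data.ctilde g f₁ (fun y => R.data.map (equivFiberEquiv E y) R.data.one)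
      = fun z => R.data.map ((equivFiberEquiv E (E 0)).trans
          (fpFiberFst g f₁ (hg z))) R.data.one := by
    funext z
    show (match hgz : g z with
      | some y => R.data.map (fpFiberFst g f₁ hgz)
          ((fun y => R.data.map (equivFiberEquiv E y) R.data.one) y)
      | none => R.data.zero _) = _
    split
    next y hy =>
      have hy0 : y = E 0 := by
        have h := hg z; rw [hy] at h; exact Option.some.inj h
      subst hy0
      rw [← R.map_trans]
    next hn =>
      rw [hg z] at hn; cases hn
  rw [hct]
  have step2 := congr_contr R (rfl : fpFst g f₁ = fun p => some ((g2eP g E hg) p))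
    (R.data.map ((g2e₂ g E 0).trans (constFiberEquiv FPT 0).symm) (fam (E 0)))
    (T := fun _ => Fin 1) (fun _ => R.data.one)
    (fun z => (equivFiberEquiv E (E 0)).trans (fpFiberFst g f₁ (hg z)))
    (fun z => equivFiberEquiv (g2eP g E hg) z)
    (fun z p => Subtype.ext (Prod.ext rfl (Subsingleton.elim _ _)))
  rw [step2]
  exact (R.map_eq_contr (g2eP g E hg) _).trans (R.map_trans _ _ _).symm

end Aux3
section Aux4

/-- Fiber equivalence for postcomposition with a bijection (domain side). -/
def nfe {X X' Y : Type} (e : X ≃ X') (F : X' → Option Y) (y : Y) :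
    pfib F y ≃ pfib (fun x => F (e x)) y where
  toFun p := ⟨e.symm p.1, by simpa using p.2⟩
  invFun q := ⟨e q.1, q.2⟩
  left_inv p := Subtype.ext (e.apply_symm_apply p.1)
  right_inv q := Subtype.ext (e.symm_apply_apply q.1)

def muEq {X X' Y : Type} (e : X ≃ X') (F : X' → Option Y) (y : Y) :
    pfib (pcomp (fun x => F (e x)) (fun x' : X' => some (e.symm x'))) y
      ≃ pfib (fun x => F (e x)) y where
  toFun q := ⟨e.symm q.1, q.2⟩
  invFun p := ⟨e p.1, by
    show F (e (e.symm (e p.1))) = some y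
    rw [Equiv.symm_apply_apply]; exact p.2⟩
  left_inv q := Subtype.ext (e.apply_symm_apply q.1)
  right_inv p := Subtype.ext (e.symm_apply_apply p.1)

lemma resMap_graph₂ {X X' Y : Type} (e : X ≃ X') (F : X' → Option Y) (y : Y)
    (q : pfib (pcomp (fun x => F (e x)) (fun x' : X' => some (e.symm x'))) y) :
    resMap (fun x => F (e x)) (fun x' : X' => some (e.symm x')) y q
      = some (muEq e F y q) := by
  show (Option.some (e.symm q.1)).bind _ = _
  rw [Option.bind_some, dif_pos (show F (e (e.symm q.1)) = some y from q.2)]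
  rfl

lemma resMap_graph₂_fiber_subsingleton {X X' Y : Type} (e : X ≃ X') (F : X' → Option Y)
    (y : Y) (p : pfib (fun x => F (e x)) y) :
    Subsingleton (pfib (resMap (fun x => F (e x)) (fun x' : X' => some (e.symm x')) y) p) := by
  constructor
  rintro ⟨q, hq⟩ ⟨q', hq'⟩
  rw [resMap_graph₂] at hq hq'
  have h1 := Option.some.inj hq
  have h2 := Option.some.inj hq'
  have e1 : q = (muEq e F y).symm p := by
    have := congrArg (muEq e F y).symm h1; rwa [Equiv.symm_apply_apply] at this
  have e2 : q' = (muEq e F y).symm p := by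
    have := congrArg (muEq e F y).symm h2; rwa [Equiv.symm_apply_apply] at this
  apply Subtype.ext
  show q = q'
  rw [e1, e2]

variable (R : GenRing)

/-- Naturality of `contr` in the contracted element. -/
lemma nat_contr_dom {X X' Y : Type} [Finite X] [Finite X'] [Finite Y]
    (e : X ≃ X') (F : X' → Option Y) (a : R.data.A X) (fam : ∀ y, R.data.A (pfib F y)) :
    R.data.contr F (R.data.map e a) fam
      = R.data.contr (fun x => F (e x)) a (fun y => R.data.map (nfe e F y) (fam y)) := by
  rw [← R.map_eq_mul e a]
  have hF : F = pcomp (fun x => F (e x)) (fun x' : X' => some (e.symm x')) :=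
    funext fun x' => by show F x' = F (e (e.symm x')); rw [Equiv.apply_symm_apply]
  have hfam0 : fam = fun y => R.data.map (Equiv.refl _) (fam y) :=
    funext fun y => (R.map_refl _ (fam y)).symm
  conv_lhs => rw [hfam0]
  rw [congr_contr R hF _ (T := fun y => pfib F y) fam
      (fun y => Equiv.refl _) (fun y => pfibCongr hF y) (fun y p => rfl)]
  rw [R.right_adj (fun x => F (e x)) (fun x' : X' => some (e.symm x')) a
      (fun y => R.data.map (pfibCongr hF y) (fam y))
      (fun x => R.data.map (equivFiberEquiv e.symm x) R.data.one)]
  have hfam2 : R.data.econtr (fun x => F (e x)) (fun x' : X' => some (e.symm x'))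
        (fun y => R.data.map (pfibCongr hF y) (fam y))
        (fun x => R.data.map (equivFiberEquiv e.symm x) R.data.one)
      = fun y => R.data.map (nfe e F y) (fam y) := by
    funext y
    show R.data.contr (resMap _ _ y) (R.data.map (pfibCongr hF y) (fam y)) _ = _
    have hone : (fun p => R.data.map
          (resFiberEquiv (fun x => F (e x)) (fun x' : X' => some (e.symm x')) y p)
          ((fun x => R.data.map (equivFiberEquiv e.symm x) R.data.one) p.1))
        = fun p => R.data.map ((equivFiberEquiv e.symm p.1).trans
            (resFiberEquiv (fun x => F (e x)) (fun x' : X' => some (e.symm x')) y p))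
            R.data.one := by
      funext p; rw [R.map_trans]
    rw [hone]
    have hres : resMap (fun x => F (e x)) (fun x' : X' => some (e.symm x')) y
        = fun q => some ((muEq e F y) q) := funext (resMap_graph₂ e F y)
    have step := congr_contr R hres (R.data.map (pfibCongr hF y) (fam y))
      (T := fun _ => Fin 1) (fun _ => R.data.one)
      (fun p => (equivFiberEquiv e.symm p.1).trans
          (resFiberEquiv (fun x => F (e x)) (fun x' : X' => some (e.symm x')) y p))
      (fun p => equivFiberEquiv (muEq e F y) p)
      (fun p z => Subtype.ext rfl)
    rw [step]
    have := R.map_eq_contr (muEq e F y) (R.data.map (pfibCongr hF y) (fam y))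
    rw [this, ← R.map_trans]
    congr 1
  rw [hfam2]

instance graph_fiber_subsingleton {Y Y' : Type} (ε : Y ≃ Y') (y' : Y') :
    Subsingleton (pfib (fun y => some (ε y)) y') := by
  constructor
  rintro ⟨u, hu⟩ ⟨v, hv⟩
  apply Subtype.ext
  show u = v
  exact ε.injective ((Option.some.inj hu).trans (Option.some.inj hv).symm)

/-- The composite fiber equivalence in target-side naturality of `contr`. -/
abbrev V4Theta {X Y Y' : Type} (ε : Y ≃ Y') (f : X → Option Y) (y' : Y')
    (hg : ∀ q, resMap (fun y => some (ε y)) f y' q = some (equivFiberEquiv ε y' 0)) :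
    pfib f (ε.symm y') ≃ pfib (pcomp (fun y => some (ε y)) f) y' :=
  (resFiberEquiv (fun y => some (ε y)) f y' (equivFiberEquiv ε y' 0)).trans
    (ground2Equiv (resMap (fun y => some (ε y)) f y') (equivFiberEquiv ε y') hg)

lemma V4resMap_total {X Y Y' : Type} (ε : Y ≃ Y') (f : X → Option Y) (y' : Y')
    (q : pfib (pcomp (fun y => some (ε y)) f) y') :
    resMap (fun y => some (ε y)) f y' q = some (equivFiberEquiv ε y' 0) := by
  have hq := q.2
  show (f q.1).bind _ = _
  rcases hfq : f q.1 with _ | y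
  · exfalso
    have : pcomp (fun y => some (ε y)) f q.1 = none := by
      show (f q.1).bind _ = none
      rw [hfq]; rfl
    rw [hq] at this; cases this
  · have hq2 : some (ε y) = some y' := by
      have : pcomp (fun y => some (ε y)) f q.1 = some (ε y) := by
        show (f q.1).bind _ = _
        rw [hfq]; rfl
      rw [← this, hq]
    rw [Option.bind_some, dif_pos hq2]
    congr 1
    apply Subtype.ext
    show y = ε.symm y'
    rw [← Option.some.inj hq2, Equiv.symm_apply_apply]

/-- Naturality of `contr` in the target. -/
lemma V4_contr {X Y Y' : Type} [Finite X] [Finite Y] [Finite Y'] (ε : Y ≃ Y')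
    (f : X → Option Y) (a : R.data.A X) (fam : ∀ y, R.data.A (pfib f y)) :
    R.data.map ε (R.data.contr f a fam)
      = R.data.contr (pcomp (fun y => some (ε y)) f) a
          (fun y' => R.data.map (V4Theta ε f y' (V4resMap_total ε f y'))
            (fam ((equivFiberEquiv ε y' 0).1))) := by
  rw [← R.map_eq_contr ε (R.data.contr f a fam)]
  rw [← R.left_adj (fun y => some (ε y)) f a
      (fun y' => R.data.map (equivFiberEquiv ε y') R.data.one) fam]
  have hfam : R.data.emul (fun y => some (ε y)) f
        (fun y' => R.data.map (equivFiberEquiv ε y') R.data.one) fam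
      = fun y' => R.data.map (V4Theta ε f y' (V4resMap_total ε f y'))
          (fam ((equivFiberEquiv ε y' 0).1)) := by
    funext y'
    show R.data.mul (resMap _ _ y') (R.data.map (equivFiberEquiv ε y') R.data.one) _ = _
    rw [ground2 R (resMap (fun y => some (ε y)) f y') (equivFiberEquiv ε y')
      (V4resMap_total ε f y')
      (fun p => R.data.map (resFiberEquiv (fun y => some (ε y)) f y' p) (fam p.1))]
    rw [← R.map_trans]
    rfl
  rw [hfam]

end Aux4
section Aux5

variable (R : GenRing)

lemma pfibCongr_refl {X Y : Type} (f : X → Option Y) (y : Y) :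
    pfibCongr (rfl : f = f) y = Equiv.refl _ :=
  Equiv.ext fun p => Subtype.ext rfl

lemma mul_pfibCongr {X Y : Type} [Finite X] [Finite Y] {f g : X → Option Y} (h : f = g)
    (a : R.data.A Y) (fam : ∀ y, R.data.A (pfib f y)) :
    R.data.mul f a fam = R.data.mul g a (fun y => R.data.map (pfibCongr h y) (fam y)) := by
  subst h
  have : (fun y => R.data.map (pfibCongr (rfl : f = f) y) (fam y)) = fam := by
    funext y; rw [pfibCongr_refl, R.map_refl]
  rw [this]

lemma contr_pfibCongr {X Y : Type} [Finite X] [Finite Y] {f g : X → Option Y} (h : f = g)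
    (a : R.data.A X) (fam : ∀ y, R.data.A (pfib f y)) :
    R.data.contr f a fam = R.data.contr g a (fun y => R.data.map (pfibCongr h y) (fam y)) := by
  subst h
  have : (fun y => R.data.map (pfibCongr (rfl : f = f) y) (fam y)) = fam := by
    funext y; rw [pfibCongr_refl, R.map_refl]
  rw [this]

lemma map_equiv_subsingleton {T T' : Type} [Finite T] [Finite T'] [Subsingleton T']
    (e₁ e₂ : T ≃ T') (v : R.data.A T) : R.data.map e₁ v = R.data.map e₂ v := by
  have : e₁ = e₂ := Equiv.ext fun p => Subsingleton.elim _ _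
  rw [this]

/-- Computation of the fiberwise product family over identity maps. -/
lemma ML1 {X : Type} [Finite X] (c : X → R.data.A (Fin 1)) (y : R.data.A (Fin 1)) :
    R.data.emul (fun x' : X => some x') (fun x' : X => some x')
        (fun x => R.data.map (idFiberEquiv x) (c x))
        (fun x => R.data.map (idFiberEquiv x) y)
      = fun x => R.data.map (idFiberEquiv x)
          (R.data.mul (fun z : Fin 1 => some z) (c x)
            (fun z => R.data.map (idFiberEquiv z) y)) := by
  funext x
  haveI hsub : Subsingleton (pfib (pcomp (fun x' : X => some x') (fun x' : X => some x')) x) :=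
    ⟨fun u v => Subtype.ext ((Option.some.inj u.2).trans (Option.some.inj v.2).symm)⟩
  haveI hsub2 : Subsingleton (pfib (fun x' : X => some x') x) :=
    ⟨fun u v => Subtype.ext ((Option.some.inj u.2).trans (Option.some.inj v.2).symm)⟩
  have hFm : ∀ q, resMap (fun x' : X => some x') (fun x' : X => some x') x q
      = some (⟨q.1, q.2⟩ : pfib (fun x' : X => some x') x) := by
    intro q
    show (Option.some q.1).bind _ = _
    rw [Option.bind_some, dif_pos (show (fun x' : X => some x') q.1 = some x from q.2)]
  show R.data.mul (resMap (fun x' : X => some x') (fun x' : X => some x') x)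
      (R.data.map (idFiberEquiv x) (c x))
      (fun p => R.data.map (resFiberEquiv (fun x' : X => some x') (fun x' : X => some x') x p)
        (R.data.map (idFiberEquiv p.1) y)) = _
  rw [← R.map_eq_mul (idFiberEquiv x) (c x)]
  rw [← R.assoc (fun t : pfib (fun x' : X => some x') x => some ((idFiberEquiv x).symm t))
      (resMap (fun x' : X => some x') (fun x' : X => some x') x) (c x)
      (fun z => R.data.map (equivFiberEquiv (idFiberEquiv x).symm z) R.data.one)
      (fun p => R.data.map (resFiberEquiv (fun x' : X => some x') (fun x' : X => some x') x p)
        (R.data.map (idFiberEquiv p.1) y))]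
  rw [V1_mul R (idFiberEquiv x) (fun z : Fin 1 => some z) (c x)
      (fun z => R.data.map (idFiberEquiv z) y)]
  have hfun : pcomp (fun t : pfib (fun x' : X => some x') x => some ((idFiberEquiv x).symm t))
        (resMap (fun x' : X => some x') (fun x' : X => some x') x)
      = fun t => (fun z : Fin 1 => some z) ((idFiberEquiv x).symm t) := by
    funext q
    show ((resMap (fun x' : X => some x') (fun x' : X => some x') x) q).bind _ = _
    rw [hFm q, Option.bind_some]
    exact congrArg some (Subsingleton.elim _ _)
  rw [mul_pfibCongr R hfun (c x)]
  have hg₂ : ∀ (z : Fin 1) q, resMap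
        (fun t : pfib (fun x' : X => some x') x => some ((idFiberEquiv x).symm t))
        (resMap (fun x' : X => some x') (fun x' : X => some x') x) z q
      = some ((equivFiberEquiv (idFiberEquiv x).symm z) 0) := by
    intro z q
    show ((resMap (fun x' : X => some x') (fun x' : X => some x') x) q.1).bind _ = _
    rw [hFm q.1, Option.bind_some,
      dif_pos (show (fun t : pfib (fun x' : X => some x') x =>
        some ((idFiberEquiv x).symm t)) ⟨q.1.1, q.1.2⟩ = some z from
        congrArg some (Subsingleton.elim _ _))]
    exact congrArg some (Subtype.ext (Subsingleton.elim _ _))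
  have hfam : (fun z => R.data.map (pfibCongr hfun z)
        ((R.data.emul (fun t : pfib (fun x' : X => some x') x => some ((idFiberEquiv x).symm t))
          (resMap (fun x' : X => some x') (fun x' : X => some x') x)
          (fun z => R.data.map (equivFiberEquiv (idFiberEquiv x).symm z) R.data.one)
          (fun p => R.data.map (resFiberEquiv (fun x' : X => some x') (fun x' : X => some x') x p)
            (R.data.map (idFiberEquiv p.1) y))) z))
      = fun z => R.data.map (natFib (idFiberEquiv x) (fun z : Fin 1 => some z) z)
          ((fun z => R.data.map (idFiberEquiv z) y) z) := by
    funext z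
    have hent : (R.data.emul (fun t : pfib (fun x' : X => some x') x => some ((idFiberEquiv x).symm t))
          (resMap (fun x' : X => some x') (fun x' : X => some x') x)
          (fun z => R.data.map (equivFiberEquiv (idFiberEquiv x).symm z) R.data.one)
          (fun p => R.data.map (resFiberEquiv (fun x' : X => some x') (fun x' : X => some x') x p)
            (R.data.map (idFiberEquiv p.1) y))) z
        = R.data.mul (resMap (fun t : pfib (fun x' : X => some x') x => some ((idFiberEquiv x).symm t))
            (resMap (fun x' : X => some x') (fun x' : X => some x') x) z)
          (R.data.map (equivFiberEquiv (idFiberEquiv x).symm z) R.data.one)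
          (fun p => R.data.map (resFiberEquiv
              (fun t : pfib (fun x' : X => some x') x => some ((idFiberEquiv x).symm t))
              (resMap (fun x' : X => some x') (fun x' : X => some x') x) z p)
            ((fun p => R.data.map (resFiberEquiv (fun x' : X => some x') (fun x' : X => some x') x p)
              (R.data.map (idFiberEquiv p.1) y)) p.1)) := rfl
    rw [hent, ground2 R _ (equivFiberEquiv (idFiberEquiv x).symm z) (hg₂ z)]
    simp only [← R.map_trans]
    exact map_equiv_subsingleton R _ _ y
  rw [hfam]
  rfl

/-- `(b ∘ c) ∘ diag(y) = b ∘ (c ∘ y)`. -/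
lemma key2 {X : Type} [Finite X] (b : R.data.A X) (c : X → R.data.A (Fin 1))
    (y : R.data.A (Fin 1)) :
    R.data.ract (R.data.ract b c) (fun _ => y)
      = R.data.ract b (fun x => R.data.op (c x) y) := by
  show R.data.mul (fun x : X => some x)
      (R.data.mul (fun x : X => some x) b (fun x => R.data.map (idFiberEquiv x) (c x)))
      (fun x => R.data.map (idFiberEquiv x) y) = _
  rw [← R.assoc (fun x : X => some x) (fun x : X => some x) b
      (fun x => R.data.map (idFiberEquiv x) (c x))
      (fun x => R.data.map (idFiberEquiv x) y)]
  rw [ML1 R c y]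
  rfl

lemma op_assoc (a b c : R.data.A (Fin 1)) :
    R.data.op (R.data.op a b) c = R.data.op a (R.data.op b c) :=
  key2 R (X := Fin 1) a (fun _ => b) c

end Aux5
section Aux6

variable (R : GenRing)

/-- Computation of the fiberwise contraction family over identity maps. -/
lemma ML2 (a c : R.data.A (Fin 1)) :
    R.data.econtr (fun z : Fin 1 => some z) (fun z : Fin 1 => some z)
        (fun z => R.data.map (idFiberEquiv z) a)
        (fun z => R.data.map (idFiberEquiv z) c)
      = fun z => R.data.map (idFiberEquiv z) (R.data.pair a c) := by
  funext z
  haveI hsub2 : Subsingleton (pfib (fun z' : Fin 1 => some z') z) :=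
    ⟨fun u v => Subtype.ext ((Option.some.inj u.2).trans (Option.some.inj v.2).symm)⟩
  have hFm : ∀ q, resMap (fun z' : Fin 1 => some z') (fun z' : Fin 1 => some z') z q
      = some (⟨q.1, q.2⟩ : pfib (fun z' : Fin 1 => some z') z) := by
    intro q
    show (Option.some q.1).bind _ = _
    rw [Option.bind_some, dif_pos (show (fun z' : Fin 1 => some z') q.1 = some z from q.2)]
  show R.data.contr (resMap (fun z' : Fin 1 => some z') (fun z' : Fin 1 => some z') z)
      (R.data.map (idFiberEquiv z) a)
      (fun p => R.data.map (resFiberEquiv (fun z' : Fin 1 => some z') (fun z' : Fin 1 => some z') z p)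
        (R.data.map (idFiberEquiv p.1) c)) = _
  erw [nat_contr_dom R (idFiberEquiv z)
      (resMap (fun z' : Fin 1 => some z') (fun z' : Fin 1 => some z') z) a]
  rw [show R.data.pair a c = R.data.contr (fun _ : Fin 1 => some (0 : Fin 1)) a
      (fun w => R.data.map (constFiberEquiv (Fin 1) w) c) from rfl]
  rw [V4_contr R (idFiberEquiv z) (fun _ : Fin 1 => some (0 : Fin 1)) a
      (fun w => R.data.map (constFiberEquiv (Fin 1) w) c)]
  have hfn : (fun w : Fin 1 =>
        resMap (fun z' : Fin 1 => some z') (fun z' : Fin 1 => some z') z ((idFiberEquiv z) w))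
      = pcomp (fun t => some ((idFiberEquiv z) t)) (fun _ : Fin 1 => some (0 : Fin 1)) := by
    funext w
    erw [hFm]
    exact congrArg some (Subsingleton.elim _ _)
  rw [contr_pfibCongr R hfn a]
  have hfam : (fun t => R.data.map (pfibCongr hfn t)
        ((fun t => R.data.map (nfe (idFiberEquiv z)
          (resMap (fun z' : Fin 1 => some z') (fun z' : Fin 1 => some z') z) t)
          ((fun p => R.data.map (resFiberEquiv (fun z' : Fin 1 => some z')
              (fun z' : Fin 1 => some z') z p)
            (R.data.map (idFiberEquiv p.1) c)) t)) t))
      = fun y' => R.data.map (V4Theta (idFiberEquiv z) (fun _ : Fin 1 => some (0 : Fin 1)) y'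
          (V4resMap_total (idFiberEquiv z) (fun _ : Fin 1 => some (0 : Fin 1)) y'))
          ((fun w => R.data.map (constFiberEquiv (Fin 1) w) c)
            ((equivFiberEquiv (idFiberEquiv z) y' 0).1)) := by
    funext t
    simp only [← R.map_trans]
    erw [← R.map_trans, ← R.map_trans, ← R.map_trans]
    exact map_equiv_subsingleton R _ _ c
  rw [hfam]

/-- `(d ∘ c, a) = (d, (a, c))` in `A₁`. -/
lemma pair_op_assoc (d c a : R.data.A (Fin 1)) :
    R.data.pair (R.data.op d c) a = R.data.pair d (R.data.pair a c) := by
  have hra := R.right_adj (fun z : Fin 1 => some z) (fun z : Fin 1 => some z) d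
    (fun z => R.data.map (idFiberEquiv z) a) (fun z => R.data.map (idFiberEquiv z) c)
  rw [ML2 R a c] at hra
  -- transform both sides of hra into `pair` form
  have hpc : pcomp (fun z : Fin 1 => some z) (fun z : Fin 1 => some z)
      = fun _ : Fin 1 => some (0 : Fin 1) :=
    funext fun w => congrArg some (Subsingleton.elim _ _)
  have hid : (fun z : Fin 1 => some z) = fun _ : Fin 1 => some (0 : Fin 1) :=
    funext fun w => congrArg some (Subsingleton.elim _ _)
  have h1 := congr_contr R hpc (R.data.mul (fun z : Fin 1 => some z) d
      (fun z => R.data.map (idFiberEquiv z) c))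
    (T := fun _ => Fin 1) (fun _ => a)
    (fun w => idFiberEquiv w) (fun w => constFiberEquiv (Fin 1) w)
    (fun w p => Subsingleton.elim _ _)
  have h2 := congr_contr R hid d (T := fun _ => Fin 1) (fun _ => R.data.pair a c)
    (fun w => idFiberEquiv w) (fun w => constFiberEquiv (Fin 1) w)
    (fun w p => Subsingleton.elim _ _)
  exact h1.symm.trans (hra.trans h2)

lemma op_eq_pair_adj (d c : R.data.A (Fin 1)) :
    R.data.op d c = R.data.pair d (R.data.adj c) := by
  have h := pair_op_assoc R d c R.data.one
  rwa [pair_one R] at h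

lemma pair_swap (c a : R.data.A (Fin 1)) :
    R.data.pair c a = R.data.adj (R.data.pair a c) := by
  have h := pair_op_assoc R R.data.one c a
  rwa [one_op R] at h

lemma adj_adj (a : R.data.A (Fin 1)) : R.data.adj (R.data.adj a) = a := by
  have h := pair_swap R a R.data.one
  rw [pair_one R] at h
  exact h.symm

/-- `(u, d) ∘ y = (u ∘ diag y, d)` -/
lemma key1 {X : Type} [Finite X] (u d₂ : R.data.A X) (y : R.data.A (Fin 1)) :
    R.data.op (R.data.pair u d₂) y
      = R.data.pair (R.data.ract u (fun _ => y)) d₂ := by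
  have hrl := R.right_lin (fun z : Fin 1 => some z) (fun _ : X => some (0 : Fin 1)) u
    (fun z => R.data.map (idFiberEquiv z) y) (fun z => R.data.map (constFiberEquiv X z) d₂)
  -- the X ≃ FP equivalence
  refine hrl.trans ?_
  set eX : X ≃ FP (fun z : Fin 1 => some z) (fun _ : X => some (0 : Fin 1)) :=
    { toFun := fun x => ⟨((0 : Fin 1), x), ⟨0, rfl, rfl⟩⟩
      invFun := fun p => p.1.2
      left_inv := fun x => rfl
      right_inv := fun p => Subtype.ext (Prod.ext (Subsingleton.elim _ _) rfl) } with heX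
  -- inner mul
  have hinner : R.data.mul (fpSnd (fun z : Fin 1 => some z) (fun _ : X => some (0 : Fin 1))) u
        (R.data.atilde (fun z : Fin 1 => some z) (fun _ : X => some (0 : Fin 1))
          (fun z => R.data.map (idFiberEquiv z) y))
      = R.data.map eX (R.data.ract u (fun _ => y)) := by
    rw [show R.data.ract u (fun _ => y) = R.data.mul (fun x : X => some x) u
        (fun x => R.data.map (idFiberEquiv x) y) from rfl]
    rw [V1_mul R eX (fun x : X => some x) u (fun x => R.data.map (idFiberEquiv x) y)]
    have hfn2 : fpSnd (fun z : Fin 1 => some z) (fun _ : X => some (0 : Fin 1))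
        = fun p => (fun x : X => some x) (eX.symm p) := funext fun p => rfl
    rw [mul_pfibCongr R hfn2 u]
    have hfam2 : (fun x => R.data.map (pfibCongr hfn2 x)
          ((R.data.atilde (fun z : Fin 1 => some z) (fun _ : X => some (0 : Fin 1))
            (fun z => R.data.map (idFiberEquiv z) y)) x))
        = fun x => R.data.map (natFib eX (fun x : X => some x) x)
            ((fun x => R.data.map (idFiberEquiv x) y) x) := by
      funext x
      haveI : Subsingleton (pfib ((fun p => (fun x : X => some x) (eX.symm p))) x) :=
        ⟨fun p q => Subtype.ext (Subtype.ext (Prod.ext (Subsingleton.elim _ _)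
          ((Option.some.inj p.2).trans (Option.some.inj q.2).symm)))⟩
      have hat : (R.data.atilde (fun z : Fin 1 => some z) (fun _ : X => some (0 : Fin 1))
            (fun z => R.data.map (idFiberEquiv z) y)) x
          = R.data.map (fpFiberSnd (fun z : Fin 1 => some z) (fun _ : X => some (0 : Fin 1))
              (rfl : (fun _ : X => some (0 : Fin 1)) x = some 0))
            (R.data.map (idFiberEquiv (0 : Fin 1)) y) := rfl
      rw [hat]
      simp only [← R.map_trans]
      exact map_equiv_subsingleton R _ _ y
    rw [hfam2]
  rw [hinner]
  rw [nat_contr_dom R eX (fpFst (fun z : Fin 1 => some z) (fun _ : X => some (0 : Fin 1)))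
      (R.data.ract u (fun _ => y))]
  have hfn3 : (fun x => fpFst (fun z : Fin 1 => some z) (fun _ : X => some (0 : Fin 1)) (eX x))
      = fun _ : X => some (0 : Fin 1) := funext fun x => rfl
  rw [contr_pfibCongr R hfn3 (R.data.ract u (fun _ => y))]
  show R.data.contr _ _ _ = R.data.contr _ _ (fun z => R.data.map (constFiberEquiv X z) d₂)
  have hfam3 : (fun z => R.data.map (pfibCongr hfn3 z)
        ((fun z => R.data.map (nfe eX (fpFst (fun z : Fin 1 => some z)
            (fun _ : X => some (0 : Fin 1))) z)
          ((R.data.ctilde (fun z : Fin 1 => some z) (fun _ : X => some (0 : Fin 1))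
            (fun z => R.data.map (constFiberEquiv X z) d₂)) z)) z))
      = fun z => R.data.map (constFiberEquiv X z) d₂ := by
    funext z
    beta_reduce
    have hct : (R.data.ctilde (fun z : Fin 1 => some z) (fun _ : X => some (0 : Fin 1))
          (fun z => R.data.map (constFiberEquiv X z) d₂)) z
        = R.data.map (fpFiberFst (fun z : Fin 1 => some z) (fun _ : X => some (0 : Fin 1))
            (rfl : (fun z : Fin 1 => some z) z = some z))
          (R.data.map (constFiberEquiv X z) d₂) := rfl
    rw [hct]
    simp only [← R.map_trans]
    congr 1
  rw [hfam3]

lemma op_adj_left (c a : R.data.A (Fin 1)) :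
    R.data.op (R.data.adj c) a = R.data.pair a c := by
  have h := key1 R (X := Fin 1) R.data.one c a
  rw [show R.data.ract R.data.one (fun _ => a) = R.data.op R.data.one a from rfl,
    one_op R] at h
  exact h

lemma op_comm (x y : R.data.A (Fin 1)) : R.data.op x y = R.data.op y x := by
  have h1 : ∀ c a, R.data.op (R.data.adj c) a = R.data.op a (R.data.adj c) := by
    intro c a
    rw [op_adj_left R, op_eq_pair_adj R a (R.data.adj c), adj_adj R]
  calc R.data.op x y = R.data.op (R.data.adj (R.data.adj x)) y := by rw [adj_adj R]
    _ = R.data.op y (R.data.adj (R.data.adj x)) := h1 _ _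
    _ = R.data.op y x := by rw [adj_adj R]

end Aux6
section Aux7

variable (R : GenRing)

lemma hideal_pair_op_mem {I : Set (R.data.A (Fin 1))} (hI : R.IsHIdeal I)
    (b d : R.data.A (Fin 1)) {c : R.data.A (Fin 1)} (hc : c ∈ I) :
    R.data.pair (R.data.op b c) d ∈ I :=
  hI (Fin 1) b d (fun _ => c) (fun _ => hc)

lemma hideal_op_mem_left {I : Set (R.data.A (Fin 1))} (hI : R.IsHIdeal I)
    (y : R.data.A (Fin 1)) {j : R.data.A (Fin 1)} (hj : j ∈ I) :
    R.data.op y j ∈ I := by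
  have h := hideal_pair_op_mem R hI y R.data.one hj
  rwa [pair_one R] at h

lemma hideal_op_mem_right {I : Set (R.data.A (Fin 1))} (hI : R.IsHIdeal I)
    (y : R.data.A (Fin 1)) {j : R.data.A (Fin 1)} (hj : j ∈ I) :
    R.data.op j y ∈ I := by
  rw [op_comm R]
  exact hideal_op_mem_left R hI y hj

/-- The right quotient of an `h`-ideal is an `h`-ideal. -/
lemma hideal_quot {I : Set (R.data.A (Fin 1))} (hI : R.IsHIdeal I)
    (y : R.data.A (Fin 1)) : R.IsHIdeal {t | R.data.op t y ∈ I} := by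
  intro X _ b d c hc
  show R.data.op (R.data.pair (R.data.ract b c) d) y ∈ I
  rw [key1 R (R.data.ract b c) d y, key2 R b c y]
  exact hI X b d _ hc

lemma opPow_zero (s : R.data.A (Fin 1)) : R.data.opPow s 0 = R.data.one := rfl

lemma opPow_succ (s : R.data.A (Fin 1)) (n : ℕ) :
    R.data.opPow s (n + 1) = R.data.op s (R.data.opPow s n) := rfl

lemma opPow_one_eq (s : R.data.A (Fin 1)) : R.data.opPow s 1 = s := by
  rw [opPow_succ, opPow_zero, op_one R]

lemma opPow_add (s : R.data.A (Fin 1)) (m n : ℕ) :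
    R.data.op (R.data.opPow s m) (R.data.opPow s n) = R.data.opPow s (m + n) := by
  induction m with
  | zero => rw [opPow_zero, one_op R, Nat.zero_add]
  | succ k ih =>
    rw [opPow_succ, op_assoc R, ih, show k + 1 + n = k + n + 1 by omega, opPow_succ]

lemma prime_pow_mem {P : Set (R.data.A (Fin 1))} (hP : R.IsPrimeH P)
    {s : R.data.A (Fin 1)} {n : ℕ} (h : R.data.opPow s n ∈ P) : s ∈ P := by
  induction n with
  | zero => exact absurd h hP.2.1
  | succ k ih =>
    rcases hP.2.2 _ _ h with h1 | h2
    · exact h1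
    · exact ih h2

/-- Existence of a prime containing an `h`-ideal and avoiding the powers of `s`. -/
lemma exists_prime {I : Set (R.data.A (Fin 1))} (hI : R.IsHIdeal I) (s : R.data.A (Fin 1))
    (hs : ∀ n, R.data.opPow s n ∉ I) :
    ∃ P : Set (R.data.A (Fin 1)), R.IsPrimeH P ∧ I ⊆ P ∧ s ∉ P := by
  set 𝒮 : Set (Set (R.data.A (Fin 1))) :=
    {J | R.IsHIdeal J ∧ I ⊆ J ∧ ∀ n, R.data.opPow s n ∉ J} with h𝒮
  have hIS : I ∈ 𝒮 := ⟨hI, subset_rfl, hs⟩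
  have hchain : ∀ c ⊆ 𝒮, IsChain (· ⊆ ·) c → c.Nonempty →
      ∃ ub ∈ 𝒮, ∀ t ∈ c, t ⊆ ub := by
    intro c hc𝒮 hch hne
    refine ⟨⋃₀ c, ⟨?_, ?_, ?_⟩, fun t ht => Set.subset_sUnion_of_mem ht⟩
    · intro X _ b d cc hcc
      have hrange : ↑(Set.finite_range cc).toFinset ⊆ ⋃ J ∈ c, J := by
        intro a ha
        rw [Set.Finite.coe_toFinset] at ha
        obtain ⟨x, rfl⟩ := ha
        rw [← Set.sUnion_eq_biUnion]
        exact hcc x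
      obtain ⟨J₀, hJ₀c, hsub⟩ :=
        DirectedOn.exists_mem_subset_of_finset_subset_biUnion hne
          (hch.directedOn) hrange
      have hcc' : ∀ x, cc x ∈ J₀ := by
        intro x
        apply hsub
        rw [Set.Finite.coe_toFinset]
        exact ⟨x, rfl⟩
      exact Set.subset_sUnion_of_mem hJ₀c ((hc𝒮 hJ₀c).1 X b d cc hcc')
    · obtain ⟨J₀, hJ₀⟩ := hne
      exact Set.Subset.trans (hc𝒮 hJ₀).2.1 (Set.subset_sUnion_of_mem hJ₀)
    · intro n hn
      obtain ⟨J₀, hJ₀c, hmem⟩ := Set.mem_sUnion.mp hn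
      exact (hc𝒮 hJ₀c).2.2 n hmem
  obtain ⟨J, hIJ, hJmax⟩ := zorn_subset_nonempty 𝒮 hchain I hIS
  obtain ⟨hJh, hJI, hJpow⟩ := hJmax.1
  have hmaximal : ∀ K ∈ 𝒮, J ⊆ K → K = J := fun K hK hJK =>
    Set.Subset.antisymm (hJmax.2 hK hJK) hJK
  refine ⟨J, ⟨hJh, ?_, ?_⟩, hJI, ?_⟩
  · have := hJpow 0
    rwa [opPow_zero] at this
  · -- primality
    intro x y hxy
    by_contra hcon
    push_neg at hcon
    obtain ⟨hx, hy⟩ := hcon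
    -- first quotient
    have hQ1 : {t | R.data.op t y ∈ J} ∉ 𝒮 := by
      intro hmem
      have := hmaximal _ hmem (fun j hj => hideal_op_mem_right R hJh y hj)
      rw [← this] at hx
      exact hx hxy
    have hQ1h : R.IsHIdeal {t | R.data.op t y ∈ J} := hideal_quot R hJh y
    have hQ1I : I ⊆ {t | R.data.op t y ∈ J} := fun i hi =>
      hideal_op_mem_right R hJh y (hJI hi)
    have hm : ∃ m, R.data.opPow s m ∈ {t | R.data.op t y ∈ J} := by
      by_contra hno
      push_neg at hno
      exact hQ1 ⟨hQ1h, hQ1I, hno⟩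
    obtain ⟨m, hm⟩ := hm
    -- hm : op (s^m) y ∈ J
    have hym : R.data.op y (R.data.opPow s m) ∈ J := by
      rw [op_comm R]; exact hm
    have hQ2 : {t | R.data.op t (R.data.opPow s m) ∈ J} ∉ 𝒮 := by
      intro hmem
      have := hmaximal _ hmem (fun j hj => hideal_op_mem_right R hJh _ hj)
      rw [← this] at hy
      exact hy hym
    have hn : ∃ n, R.data.opPow s n ∈ {t | R.data.op t (R.data.opPow s m) ∈ J} := by
      by_contra hno
      push_neg at hno
      exact hQ2 ⟨hideal_quot R hJh _, fun i hi =>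
        hideal_op_mem_right R hJh _ (hJI hi), hno⟩
    obtain ⟨n, hn⟩ := hn
    have : R.data.opPow s (n + m) ∈ J := by
      rw [← opPow_add R]; exact hn
    exact hJpow (n + m) this
  · intro hsJ
    have := hJpow 1
    rw [opPow_one_eq R] at this
    exact this hsJ

end Aux7
section Aux8

variable (R : GenRing)

lemma isOpen_basicOpen (a : R.data.A (Fin 1)) : IsOpen (R.basicOpen a) :=
  TopologicalSpace.GenerateOpen.basic _ ⟨a, rfl⟩

lemma isClosed_zeroLocus (s : Set (R.data.A (Fin 1))) : IsClosed (R.zeroLocus s) := by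
  rw [← isOpen_compl_iff]
  have h : (R.zeroLocus s)ᶜ = ⋃ a ∈ s, R.basicOpen a := by
    ext p
    simp only [Set.mem_compl_iff, GenRing.zeroLocus, Set.mem_setOf_eq, Set.not_subset,
      Set.mem_iUnion, GenRing.basicOpen]
    simp [exists_prop]
  rw [h]
  exact isOpen_biUnion fun a _ => isOpen_basicOpen R a

lemma open_induction {U : Set (SpecG R)} (hU : IsOpen U) (p : SpecG R) (hp : p ∈ U) :
    ∃ L : List (R.data.A (Fin 1)), (∀ a ∈ L, a ∉ p.I) ∧
      ∀ q : SpecG R, (∀ a ∈ L, a ∉ q.I) → q ∈ U := by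
  have hU' : TopologicalSpace.GenerateOpen
      {V | ∃ a : R.data.A (Fin 1), V = R.basicOpen a} U := hU
  clear hU
  revert hp
  induction hU' with
  | basic V hV =>
    intro hp
    obtain ⟨a, rfl⟩ := hV
    refine ⟨[a], ?_, ?_⟩
    · intro a' ha'
      rw [List.mem_singleton] at ha'
      subst ha'
      exact hp
    · intro q hq
      exact hq a (List.mem_singleton_self a)
  | univ => exact fun _ => ⟨[], by simp, fun q _ => Set.mem_univ q⟩
  | inter V W hV hW ihV ihW =>
    intro hp
    obtain ⟨L₁, h₁, h₁'⟩ := ihV hp.1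
    obtain ⟨L₂, h₂, h₂'⟩ := ihW hp.2
    refine ⟨L₁ ++ L₂, ?_, ?_⟩
    · intro a ha
      rcases List.mem_append.mp ha with h | h
      · exact h₁ a h
      · exact h₂ a h
    · intro q hq
      exact ⟨h₁' q (fun a ha => hq a (List.mem_append_left _ ha)),
        h₂' q (fun a ha => hq a (List.mem_append_right _ ha))⟩
  | sUnion S hS ih =>
    intro hp
    obtain ⟨V, hVS, hpV⟩ := hp
    obtain ⟨L, hL, hL'⟩ := ih V hVS hpV
    exact ⟨L, hL, fun q hq => ⟨V, hVS, hL' q hq⟩⟩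

/-- Product of a list of elements of `A₁`. -/
def listProd (L : List (R.data.A (Fin 1))) : R.data.A (Fin 1) :=
  L.foldr R.data.op R.data.one

lemma listProd_notMem_prime {P : Set (R.data.A (Fin 1))} (hP : R.IsPrimeH P)
    {L : List (R.data.A (Fin 1))} (hL : ∀ a ∈ L, a ∉ P) : listProd R L ∉ P := by
  induction L with
  | nil => exact hP.2.1
  | cons a t ih =>
    intro hmem
    rcases hP.2.2 _ _ hmem with h | h
    · exact hL a (List.mem_cons_self) h
    · exact ih (fun b hb => hL b (List.mem_cons_of_mem a hb)) h

lemma listProd_mem_of_mem {P : Set (R.data.A (Fin 1))} (hPh : R.IsHIdeal P)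
    {L : List (R.data.A (Fin 1))} {a : R.data.A (Fin 1)} (ha : a ∈ L) (haP : a ∈ P) :
    listProd R L ∈ P := by
  induction L with
  | nil => cases ha
  | cons c t ih =>
    rcases List.mem_cons.mp ha with rfl | h
    · exact hideal_op_mem_right R hPh (listProd R t) haP
    · exact hideal_op_mem_left R hPh c (ih h)

variable {R} {S : GenRing}

lemma app_opPow (φ : GenRingHom R S) (a : R.data.A (Fin 1)) (n : ℕ) :
    φ.app (Fin 1) (R.data.opPow a n) = S.data.opPow (φ.app (Fin 1) a) n := by
  induction n with
  | zero => exact φ.app_one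
  | succ k ih => rw [opPow_succ, φ.app_op, ih, opPow_succ]

lemma app_listProd (φ : GenRingHom R S) (L : List (R.data.A (Fin 1))) :
    φ.app (Fin 1) (listProd R L) = listProd S (L.map (φ.app (Fin 1))) := by
  induction L with
  | nil => exact φ.app_one
  | cons a t ih => rw [show listProd R (a :: t) = R.data.op a (listProd R t) from rfl,
      φ.app_op, ih]; rfl

end Aux8
/-- **`V_A(φ⁻¹(𝔟))` is the closure of `φ*(V_B(𝔟))`.**  For a homomorphism of generalized
rings `φ : R → S` and an `h`-ideal `𝔟` of `S`, the zero locus of `φ_{[1]}⁻¹(𝔟)` in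
`spec(R)` equals the closure of the image of `V_S(𝔟)` under the induced map
`φ* : spec(S) → spec(R)`. -/
theorem zeroLocus_preimage_eq_closure_image (R S : GenRing) (φ : GenRingHom R S)
    (b : Set (S.data.A (Fin 1))) (hb : S.IsHIdeal b) :
    R.zeroLocus (φ.app (Fin 1) ⁻¹' b) = closure (φ.specMap '' S.zeroLocus b) := by
  apply Set.Subset.antisymm
  · intro p hp
    rw [mem_closure_iff]
    intro U hU hpU
    obtain ⟨L, hL, hLsub⟩ := open_induction R hU p hpU
    set a := listProd R L with ha_def
    have ha : a ∉ p.I := listProd_notMem_prime R p.prime hL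
    have hpow : ∀ n, S.data.opPow (φ.app (Fin 1) a) n ∉ b := by
      intro n hn
      have h1 : φ.app (Fin 1) (R.data.opPow a n) ∈ b := by
        rw [app_opPow]; exact hn
      have h2 : R.data.opPow a n ∈ p.I := hp h1
      exact ha (prime_pow_mem R p.prime h2)
    obtain ⟨P, hP, hbP, hsP⟩ := exists_prime S hb (φ.app (Fin 1) a) hpow
    set q : SpecG S := ⟨P, hP⟩ with hq_def
    have hqzl : q ∈ S.zeroLocus b := hbP
    refine ⟨φ.specMap q, ⟨?_, ⟨q, hqzl, rfl⟩⟩⟩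
    apply hLsub
    intro a' ha' hmem
    apply hsP
    rw [app_listProd]
    exact listProd_mem_of_mem S hP.1 (List.mem_map_of_mem ha') hmem
  · apply closure_minimal
    · rintro _ ⟨q, hq, rfl⟩
      intro x hx
      exact hq hx
    · exact isClosed_zeroLocus R _

end
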